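/- Let 0 < σ < 2 and 0 < x < 1. Then the integral ∫_0^∞ W_t(x) t^{-1-σ/2} dt is finite and ∫_0^∞ W_t(x) t^{-1-σ/2} dt = (4^{σ/2} Γ((1+σ)/2)/√π) · (ζ(1+σ, x) + ζ(1+σ, 1-x)), where ζ(1+σ, a) = ∑_{k=0}^∞ (k+a)^{-1-σ}. -/

import Mathlib

open MeasureTheory

/-- The heat kernel on the unit circle, identified with `[0,1]`:
`W_t(x) = 1 + 2 ∑_{k=1}^∞ e^{-4π²k²t} cos(2πkx)`. -/
noncomputable def circleHeatKernel (t x : ℝ) : ℝ :=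
  1 + 2 * ∑' k : ℕ, Real.exp (-4 * Real.pi ^ 2 * ((k : ℝ) + 1) ^ 2 * t) *
    Real.cos (2 * Real.pi * ((k : ℝ) + 1) * x)

open MeasureTheory Set HurwitzZeta Real

lemma heatKernel_eq_cosKernel (x : ℝ) {t : ℝ} (ht : 0 < t) :
    circleHeatKernel t x = cosKernel x (4 * π * t) := by
  have h4t : 0 < 4 * π * t := by positivity
  have hs : HasSum (fun n : ℕ => 2 * (Real.exp (-4 * π ^ 2 * ((n : ℝ) + 1) ^ 2 * t) *
      Real.cos (2 * π * ((n : ℝ) + 1) * x))) (cosKernel x (4 * π * t) - 1) := by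
    refine (hasSum_nat_cosKernel₀ x h4t).congr_fun fun n => ?_
    rw [show -π * ((n : ℝ) + 1) ^ 2 * (4 * π * t) = -4 * π ^ 2 * ((n : ℝ) + 1) ^ 2 * t by ring,
      show 2 * π * x * ((n : ℝ) + 1) = 2 * π * ((n : ℝ) + 1) * x by ring]
    ring
  rw [circleHeatKernel, ← tsum_mul_left, hs.tsum_eq]
  ring

lemma heatKernel_hasSum (x : ℝ) {t : ℝ} (ht : 0 < t) :
    HasSum (fun n : ℤ => (4 * π * t) ^ (-(1/2) : ℝ) * Real.exp (-((n : ℝ) + x) ^ 2 / (4 * t)))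
      (circleHeatKernel t x) := by
  have h4t : 0 < 4 * π * t := by positivity
  have hu : 0 < (4 * π * t)⁻¹ := by positivity
  have h2 : circleHeatKernel t x = (4 * π * t) ^ (-(1/2) : ℝ) * evenKernel x (4 * π * t)⁻¹ := by
    have hfe := evenKernel_functional_equation x ((4 * π * t)⁻¹)
    rw [one_div ((4 * π * t)⁻¹ ^ ((1:ℝ)/2)), one_div ((4 * π * t)⁻¹), inv_inv] at hfe
    have hkey : ((4 * π * t)⁻¹ ^ ((1:ℝ)/2)) = (4 * π * t) ^ (-(1/2) : ℝ) := by
      rw [Real.inv_rpow h4t.le, ← Real.rpow_neg h4t.le]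
    rw [heatKernel_eq_cosKernel x ht, hfe, hkey, ← mul_assoc,
      mul_inv_cancel₀ (by positivity), one_mul]
  rw [h2]
  refine ((hasSum_int_evenKernel x hu).mul_left _).congr_fun fun n => ?_
  congr 1
  congr 1
  have hπ : (π : ℝ) ≠ 0 := Real.pi_ne_zero
  field_simp

lemma core_pt {s c x : ℝ} (hx : (0:ℝ) < x) :
    (|(-1:ℝ)| * x ^ ((-1:ℝ) - 1)) •
      ((x ^ (-1:ℝ)) ^ (s - 1) * Real.exp (-(c * (x ^ (-1:ℝ)) ^ (1:ℝ)))) =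
    x ^ (-s - 1) * Real.exp (-c / x) := by
  rw [smul_eq_mul, abs_neg, abs_one, one_mul, Real.rpow_one, ← Real.rpow_mul hx.le,
    ← mul_assoc, ← Real.rpow_add hx, Real.rpow_neg_one]
  rw [show (-1:ℝ) - 1 + -1 * (s - 1) = -s - 1 by ring, ← div_eq_mul_inv, neg_div]

lemma core_int {s c : ℝ} (hs : 0 < s) (hc : 0 < c) :
    IntegrableOn (fun t : ℝ => t ^ (-s - 1) * Real.exp (-c / t)) (Ioi 0) ∧
    ∫ t in Ioi (0:ℝ), t ^ (-s - 1) * Real.exp (-c / t) = (1 / c) ^ s * Real.Gamma s := by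
  set f : ℝ → ℝ := fun y => y ^ (s - 1) * Real.exp (-(c * y ^ (1:ℝ))) with hf_def
  have hf : IntegrableOn f (Ioi 0) := by
    have := integrableOn_rpow_mul_exp_neg_mul_rpow (s := s - 1) (p := 1) (b := c)
      (by linarith) one_pos hc
    refine this.congr_fun (fun y hy => by simp only [hf_def, neg_mul]) measurableSet_Ioi
  constructor
  · have h := (integrableOn_Ioi_comp_rpow_iff f (p := (-1:ℝ)) (by norm_num)).mpr hf
    exact h.congr_fun (fun t ht => core_pt (mem_Ioi.mp ht)) measurableSet_Ioi
  · have h := integral_comp_rpow_Ioi f (p := (-1:ℝ)) (by norm_num)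
    have h2 : ∫ t in Ioi (0:ℝ), t ^ (-s - 1) * Real.exp (-c / t)
        = ∫ y in Ioi (0:ℝ), f y := by
      rw [← h]
      refine setIntegral_congr_fun measurableSet_Ioi (fun t ht => ?_)
      exact (core_pt (mem_Ioi.mp ht)).symm
    rw [h2]
    have := Real.integral_rpow_mul_exp_neg_mul_Ioi hs hc
    rw [← this]
    refine setIntegral_congr_fun measurableSet_Ioi (fun y hy => ?_)
    simp only [hf_def, Real.rpow_one]

theorem stmt7 (σ : ℝ) (h0 : 0 < σ) (h2 : σ < 2) (x : ℝ) (hx0 : 0 < x) (hx1 : x < 1) :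
    IntegrableOn (fun t : ℝ => circleHeatKernel t x * t ^ (-1 - σ / 2)) (Set.Ioi 0) ∧
    ∫ t in Set.Ioi (0 : ℝ), circleHeatKernel t x * t ^ (-1 - σ / 2) =
      (4 : ℝ) ^ (σ / 2) * Real.Gamma ((1 + σ) / 2) / Real.sqrt Real.pi *
        ((∑' k : ℕ, ((k : ℝ) + x) ^ (-(1 + σ))) +
          ∑' k : ℕ, ((k : ℝ) + (1 - x)) ^ (-(1 + σ))) := by
  have hπ : (0:ℝ) < π := Real.pi_pos
  set s : ℝ := (1 + σ) / 2 with hs_def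
  have hs : 0 < s := by rw [hs_def]; linarith
  have hΓ : 0 < Real.Gamma s := Real.Gamma_pos_of_pos hs
  have hne : ∀ n : ℤ, ((n:ℝ) + x) ≠ 0 := by
    intro n
    rcases le_or_gt 0 n with h | h
    · have h' : (0:ℝ) ≤ (n:ℝ) := by exact_mod_cast h
      nlinarith
    · have h' : n ≤ -1 := by omega
      have h'' : (n:ℝ) ≤ -1 := by exact_mod_cast h'
      nlinarith
  set c : ℤ → ℝ := fun n => ((n:ℝ) + x) ^ 2 / 4 with hc_def
  have hc : ∀ n, 0 < c n := fun n => by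
    have := hne n
    rw [hc_def]
    positivity
  set K : ℝ := (4:ℝ) ^ (σ/2) * Real.Gamma ((1+σ)/2) / Real.sqrt π with hK_def
  have hKnn : 0 ≤ K := by rw [hK_def]; positivity
  set g : ℤ → ℝ → ℝ :=
    fun n t => (4*π) ^ (-(1/2):ℝ) * (t ^ (-s - 1) * Real.exp (-(c n)/t)) with hg_def
  have hg_int : ∀ n, IntegrableOn (g n) (Ioi 0) := fun n =>
    ((core_int hs (hc n)).1.const_mul _)
  -- value of each integral
  have hval : ∀ n : ℤ, ∫ t in Ioi (0:ℝ), g n t = K * |(n:ℝ)+x| ^ (-(1+σ)) := by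
    intro n
    rw [hg_def]
    simp only
    rw [MeasureTheory.integral_const_mul, (core_int hs (hc n)).2]
    have h1 : (1 / c n) = (2 / |(n:ℝ)+x|) ^ (2:ℕ) := by
      rw [div_pow, sq_abs, hc_def]
      rw [show ((2:ℝ))^(2:ℕ) = 4 by norm_num]
      rw [one_div_div]
    have hb : (0:ℝ) < 2 / |(n:ℝ)+x| := by
      have := hne n
      positivity
    have h2 : (1 / c n) ^ s = 2 ^ (1+σ) * |(n:ℝ)+x| ^ (-(1+σ)) := by
      rw [h1, ← Real.rpow_natCast (2 / |(n:ℝ)+x|) 2, ← Real.rpow_mul hb.le]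
      rw [show ((2:ℕ):ℝ) * s = 1 + σ by rw [hs_def]; push_cast; ring]
      rw [Real.div_rpow (by norm_num) (abs_nonneg _), Real.rpow_neg (abs_nonneg _),
        div_eq_mul_inv]
    rw [h2]
    have h3 : (4*π:ℝ) ^ (-(1/2):ℝ) = (2 * Real.sqrt π)⁻¹ := by
      rw [Real.rpow_neg (by positivity), ← Real.sqrt_eq_rpow,
        show (4*π:ℝ) = (2:ℝ)^2 * π by norm_num,
        Real.sqrt_mul (by positivity), Real.sqrt_sq (by norm_num)]
    have h4 : (2:ℝ) ^ ((1:ℝ)+σ) = 2 * 2 ^ σ := by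
      rw [Real.rpow_add two_pos, Real.rpow_one]
    have h5 : (4:ℝ) ^ (σ/2) = 2 ^ σ := by
      rw [show (4:ℝ) = (2:ℝ)^(2:ℕ) by norm_num, ← Real.rpow_natCast 2 2,
        ← Real.rpow_mul (by norm_num), show ((2:ℕ):ℝ) * (σ/2) = σ by push_cast; ring]
    rw [h3, h4, hK_def, h5, ← hs_def]
    have hsq : Real.sqrt π ≠ 0 := by positivity
    field_simp
  -- summability of the Hurwitz series
  have hsum1 : Summable (fun k : ℕ => ((k:ℝ) + x) ^ (-(1+σ))) := by
    have h := (Real.summable_one_div_nat_add_rpow x (1+σ)).2 (by linarith)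
    refine h.congr fun k => ?_
    have hk : (0:ℝ) < (k:ℝ) + x := by positivity
    rw [abs_of_pos hk, Real.rpow_neg hk.le, one_div]
  have hsum2 : Summable (fun k : ℕ => ((k:ℝ) + (1 - x)) ^ (-(1+σ))) := by
    have h := (Real.summable_one_div_nat_add_rpow (1-x) (1+σ)).2 (by linarith)
    refine h.congr fun k => ?_
    have hk : (0:ℝ) < (k:ℝ) + (1-x) := by
      have : (0:ℝ) ≤ (k:ℝ) := k.cast_nonneg
      linarith
    rw [abs_of_pos hk, Real.rpow_neg hk.le, one_div]
  have hZ : HasSum (fun n : ℤ => |(n:ℝ) + x| ^ (-(1+σ)))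
      ((∑' k : ℕ, ((k:ℝ) + x) ^ (-(1+σ))) + ∑' k : ℕ, ((k:ℝ) + (1-x)) ^ (-(1+σ))) := by
    refine HasSum.of_nat_of_neg_add_one ?_ ?_
    · refine hsum1.hasSum.congr_fun fun k => ?_
      have hk : (0:ℝ) < (k:ℝ) + x := by positivity
      rw [Int.cast_natCast, abs_of_pos hk]
    · refine hsum2.hasSum.congr_fun fun k => ?_
      have hk : (0:ℝ) < (k:ℝ) + (1-x) := by
        have : (0:ℝ) ≤ (k:ℝ) := k.cast_nonneg
        linarith
      rw [show ((-(k+1):ℤ):ℝ) + x = -((k:ℝ) + (1-x)) by push_cast; ring, abs_neg,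
        abs_of_pos hk]
  -- pointwise has-sum of g
  have hpt : ∀ t : ℝ, t ∈ Ioi (0:ℝ) → HasSum (fun n : ℤ => g n t)
      (circleHeatKernel t x * t ^ (-1 - σ/2)) := by
    intro t ht
    rw [mem_Ioi] at ht
    refine ((heatKernel_hasSum x ht).mul_right (t ^ (-1 - σ/2))).congr_fun fun n => ?_
    rw [hg_def]
    simp only
    rw [Real.mul_rpow (by positivity) ht.le]
    have he : Real.exp (-(c n)/t) = Real.exp (-((n:ℝ)+x)^2/(4*t)) := by
      rw [hc_def]
      simp only
      rw [neg_div, neg_div, div_div]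
    have hts : t ^ (-(1/2):ℝ) * t ^ (-1-σ/2) = t ^ (-s-1) := by
      rw [← Real.rpow_add ht]
      congr 1
      rw [hs_def]; ring
    rw [he, ← hts]
    ring
  -- measurability of each g n
  have hmeas : ∀ n : ℤ, AEStronglyMeasurable (g n) (volume.restrict (Ioi 0)) := by
    intro n
    apply Measurable.aestronglyMeasurable
    rw [hg_def]
    fun_prop
  -- nonnegativity on Ioi 0
  have hgnn : ∀ n : ℤ, ∀ t ∈ Ioi (0:ℝ), 0 ≤ g n t := by
    intro n t ht
    rw [mem_Ioi] at ht
    rw [hg_def]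
    have h1 : (0:ℝ) ≤ t ^ (-s-1) := (Real.rpow_pos_of_pos ht _).le
    exact mul_nonneg (by positivity) (mul_nonneg h1 (Real.exp_pos _).le)
  have hnorm : ∀ n : ℤ, ∫⁻ t in Ioi (0:ℝ), ‖g n t‖₊ = ∫⁻ t in Ioi (0:ℝ), ENNReal.ofReal (g n t) := by
    intro n
    refine lintegral_congr_ae ((ae_restrict_iff' measurableSet_Ioi).2
      (Filter.Eventually.of_forall fun t ht => ?_))
    exact Real.enorm_eq_ofReal (hgnn n t ht)
  have hlint : ∀ n : ℤ, ∫⁻ t in Ioi (0:ℝ), ENNReal.ofReal (g n t)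
      = ENNReal.ofReal (K * |(n:ℝ)+x| ^ (-(1+σ))) := by
    intro n
    rw [← ofReal_integral_eq_lintegral_ofReal (hg_int n)
      ((ae_restrict_iff' measurableSet_Ioi).2 (Filter.Eventually.of_forall (hgnn n))), hval n]
  have hvsum : Summable (fun n : ℤ => K * |(n:ℝ)+x| ^ (-(1+σ))) := hZ.summable.mul_left K
  have hvnn : ∀ n : ℤ, 0 ≤ K * |(n:ℝ)+x| ^ (-(1+σ)) := fun n =>
    mul_nonneg hKnn (Real.rpow_nonneg (abs_nonneg _) _)
  have hofR : (∑' n : ℤ, ENNReal.ofReal (K * |(n:ℝ)+x| ^ (-(1+σ))))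
      = ENNReal.ofReal (∑' n : ℤ, K * |(n:ℝ)+x| ^ (-(1+σ))) :=
    (ENNReal.ofReal_tsum_of_nonneg hvnn hvsum).symm
  have hlsum : ∑' n : ℤ, ∫⁻ t in Ioi (0:ℝ), ‖g n t‖₊ ≠ ⊤ := by
    simp_rw [hnorm, hlint]
    rw [hofR]
    exact ENNReal.ofReal_ne_top
  have hswap := MeasureTheory.integral_tsum hmeas hlsum
  have haeeq : (fun t => circleHeatKernel t x * t ^ (-1 - σ/2))
      =ᵐ[volume.restrict (Ioi 0)] fun t => ∑' n : ℤ, g n t := by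
    refine (ae_restrict_iff' measurableSet_Ioi).2 (Filter.Eventually.of_forall fun t ht => ?_)
    exact ((hpt t ht).tsum_eq).symm
  have hmeasF : AEStronglyMeasurable (fun t => circleHeatKernel t x * t ^ (-1 - σ/2))
      (volume.restrict (Ioi 0)) := by
    apply ContinuousOn.aestronglyMeasurable ?_ measurableSet_Ioi
    apply ContinuousOn.mul
    · have h1 : ContinuousOn (fun t : ℝ => cosKernel x (4*π*t)) (Ioi 0) := by
        refine (continuousOn_cosKernel x).comp (Continuous.continuousOn (by continuity)) ?_
        intro t ht
        rw [mem_Ioi] at ht ⊢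
        positivity
      exact h1.congr fun t ht => heatKernel_eq_cosKernel x (mem_Ioi.mp ht)
    · intro t ht
      exact (Real.continuousAt_rpow_const t _ (Or.inl (mem_Ioi.mp ht).ne')).continuousWithinAt
  have hfin : HasFiniteIntegral (fun t => circleHeatKernel t x * t ^ (-1 - σ/2))
      (volume.restrict (Ioi 0)) := by
    show (∫⁻ t in Ioi (0:ℝ), ‖circleHeatKernel t x * t ^ (-1 - σ/2)‖₊) < ⊤
    have step1 : ∫⁻ t in Ioi (0:ℝ), ‖circleHeatKernel t x * t ^ (-1 - σ/2)‖₊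
        = ∫⁻ t in Ioi (0:ℝ), ∑' n : ℤ, ENNReal.ofReal (g n t) := by
      refine lintegral_congr_ae ((ae_restrict_iff' measurableSet_Ioi).2
        (Filter.Eventually.of_forall fun t ht => ?_))
      have hF : 0 ≤ circleHeatKernel t x * t ^ (-1 - σ/2) := by
        rw [← (hpt t ht).tsum_eq]
        exact tsum_nonneg fun n => hgnn n t ht
      beta_reduce
      rw [(show ((‖circleHeatKernel t x * t ^ (-1 - σ/2)‖₊ : ENNReal)) =
          ENNReal.ofReal (circleHeatKernel t x * t ^ (-1 - σ/2)) from Real.enorm_eq_ofReal hF), ← (hpt t ht).tsum_eq,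
        ENNReal.ofReal_tsum_of_nonneg (fun n => hgnn n t ht) (hpt t ht).summable]
    have hlswap := lintegral_tsum (μ := volume.restrict (Ioi 0))
      (f := fun (n : ℤ) => fun (t : ℝ) => ENNReal.ofReal (g n t))
      (fun n => (hmeas n).aemeasurable.ennreal_ofReal)
    rw [step1, hlswap]
    simp_rw [hlint]
    rw [hofR]
    exact ENNReal.ofReal_lt_top
  refine ⟨⟨hmeasF, hfin⟩, ?_⟩
  rw [integral_congr_ae haeeq, hswap]
  simp_rw [hval]
  rw [tsum_mul_left, hZ.tsum_eq]
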